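/- Let (X,d) be a metric space, μ a Borel measure on X, and o ∈ X. Assume that μ(B(o,r)) < ∞ for every r > 0, that the function r ↦ μ(B(o,r)) is locally Lipschitz continuous on (0,∞), and that μ({o}) = 0. Let φ : (0,∞) → [0,∞) be continuous and monotone (non-increasing or non-decreasing), and let f : X → [0,∞) be μ-measurable and bounded on bounded subsets of X. Then for every R > 0, ∫_{B(o,R)} φ(d(o,z)) f(z) dμ(z) = ∫₀^R φ(r) |f|_{∂B(o,r)} dr, as an equality of values in [0,∞]. -/

import Mathlib

open MeasureTheory Metric Filter Set
open scoped ENNReal NNReal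

/-- The boundary integral of `f` on `∂B(o,r)`:
`|f|_{∂B(o,r)} = limsup_{δ→0⁺} (1/δ) ∫_{B(o,r+δ)∖B(o,r)} f dμ`. -/
noncomputable def bdryIntegral {X : Type*} [MetricSpace X] [MeasurableSpace X]
    (μ : Measure X) (f : X → ℝ) (o : X) (r : ℝ) : ℝ :=
  limsup (fun δ : ℝ => (∫ z in ball o (r + δ) \ ball o r, f z ∂μ) / δ)
    (nhdsWithin 0 (Ioi 0))

private lemma aux_ofReal_sub (x y : ℝ≥0∞) (hx : x ≠ ⊤) (hyx : y ≤ x) :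
    ENNReal.ofReal (x.toReal - y.toReal) = x - y := by
  rw [← ENNReal.toReal_sub_of_le hyx hx, ENNReal.ofReal_toReal]
  exact ne_top_of_le_ne_top hx tsub_le_self

theorem stmt_6 {X : Type*} [MetricSpace X] [MeasurableSpace X] [BorelSpace X]
    (μ : Measure X) (o : X)
    (hfin : ∀ r : ℝ, 0 < r → μ (ball o r) < ⊤)
    (hLip : ∀ a : ℝ, 0 < a → ∃ (K : NNReal) (t : Set ℝ), t ∈ nhdsWithin a (Ioi 0) ∧
      LipschitzOnWith K (fun r : ℝ => (μ (ball o r)).toReal) t)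
    (hpt : μ {o} = 0)
    (φ : ℝ → ℝ) (hφc : ContinuousOn φ (Ioi 0)) (hφ0 : ∀ r : ℝ, 0 < r → 0 ≤ φ r)
    (hφmono : MonotoneOn φ (Ioi 0) ∨ AntitoneOn φ (Ioi 0))
    (f : X → ℝ) (hf : Measurable f) (hf0 : ∀ z, 0 ≤ f z)
    (hbd : ∀ s : Set X, Bornology.IsBounded s → ∃ C : ℝ, ∀ z ∈ s, |f z| ≤ C) :
    ∀ R : ℝ, 0 < R →
      ∫⁻ z in ball o R, ENNReal.ofReal (φ (dist o z) * f z) ∂μ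
        = ∫⁻ r in Ioo (0:ℝ) R, ENNReal.ofReal (φ r * bdryIntegral μ f o r) := by
  intro R hR
  set T : X → ℝ := fun z => dist o z with hTdef
  have hTmeas : Measurable T := (continuous_const.dist continuous_id).measurable
  set w : X → ℝ≥0∞ := fun z => ENNReal.ofReal (f z) with hwdef
  have hwmeas : Measurable w := ENNReal.measurable_ofReal.comp hf
  set ν : Measure X := μ.withDensity w with hνdef
  have hνac : ν ≪ μ := withDensity_absolutelyContinuous μ w
  -- bounds for f on balls
  have hC : ∀ r : ℝ, ∃ C : ℝ, 0 ≤ C ∧ ∀ z ∈ ball o r, f z ≤ C := by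
    intro r
    obtain ⟨C, hC⟩ := hbd (ball o r) isBounded_ball
    exact ⟨max C 0, le_max_right _ _, fun z hz =>
      le_trans (le_trans (le_abs_self _) (hC z hz)) (le_max_left _ _)⟩
  have hμball : ∀ r : ℝ, μ (ball o r) < ⊤ := by
    intro r
    rcases le_or_gt r 0 with h | h
    · simp [Metric.ball_eq_empty.2 h]
    · exact hfin r h
  have hνball : ∀ r : ℝ, ν (ball o r) < ⊤ := by
    intro r
    obtain ⟨C, hC0, hCle⟩ := hC r
    have h1 : ν (ball o r) ≤ ENNReal.ofReal C * μ (ball o r) := by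
      rw [hνdef, withDensity_apply _ measurableSet_ball]
      calc ∫⁻ z in ball o r, w z ∂μ
          ≤ ∫⁻ _ in ball o r, ENNReal.ofReal C ∂μ :=
            setLIntegral_mono measurable_const fun z hz =>
              ENNReal.ofReal_le_ofReal (hCle z hz)
        _ = ENNReal.ofReal C * μ (ball o r) := setLIntegral_const _ _
    exact h1.trans_lt (ENNReal.mul_lt_top ENNReal.ofReal_lt_top (hμball r))
  -- spheres are null
  have hsph : ∀ r : ℝ, μ (sphere o r) = 0 := by
    intro r
    rcases lt_trichotomy r 0 with h | h | h
    · have : sphere o r = ∅ := by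
        ext z
        simp only [mem_sphere, mem_empty_iff_false, iff_false]
        intro hz
        linarith [dist_nonneg (x := z) (y := o), hz]
      simp [this]
    · have : sphere o r ⊆ {o} := by
        intro z hz
        have : dist z o = 0 := by rw [mem_sphere] at hz; rw [hz, h]
        simpa [dist_eq_zero] using this
      exact le_antisymm (le_trans (measure_mono this) hpt.le) (zero_le)
    · obtain ⟨K, t, ht, hK⟩ := hLip r h
      obtain ⟨ε, hε, hsub⟩ : ∃ ε > 0, Ioo (r - ε) (r + ε) ∩ Ioi 0 ⊆ t := by
        rcases mem_nhdsWithin_iff.1 ht with ⟨ε, hε, h'⟩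
        exact ⟨ε, hε, by rwa [Real.ball_eq_Ioo] at h'⟩
      have key : ∀ δ : ℝ, 0 < δ → δ < min ε r →
          μ (sphere o r) ≤ ENNReal.ofReal ((K : ℝ) * (2 * δ)) := by
        intro δ hδ hδ'
        have hδε : δ < ε := lt_of_lt_of_le hδ' (min_le_left _ _)
        have hδr : δ < r := lt_of_lt_of_le hδ' (min_le_right _ _)
        have h1t : r - δ ∈ t := hsub ⟨⟨by linarith, by linarith⟩, by simp; linarith⟩
        have h2t : r + δ ∈ t := hsub ⟨⟨by linarith, by linarith⟩, by simp; linarith⟩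
        have hss : sphere o r ⊆ ball o (r + δ) \ ball o (r - δ) := by
          intro z hz
          rw [mem_sphere] at hz
          constructor
          · rw [mem_ball]; linarith
          · rw [mem_ball]; intro h'; linarith
        have hsub2 : ball o (r - δ) ⊆ ball o (r + δ) := ball_subset_ball (by linarith)
        have hdiff : μ (ball o (r + δ) \ ball o (r - δ))
            = μ (ball o (r + δ)) - μ (ball o (r - δ)) :=
          measure_diff hsub2 measurableSet_ball.nullMeasurableSet (hμball _).ne
        have hlip := lipschitzOnWith_iff_dist_le_mul.1 hK _ h2t _ h1t
        rw [Real.dist_eq, Real.dist_eq] at hlip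
        have habs : |r + δ - (r - δ)| = 2 * δ := by rw [abs_of_nonneg (by linarith)]; ring
        rw [habs] at hlip
        calc μ (sphere o r) ≤ μ (ball o (r + δ) \ ball o (r - δ)) := measure_mono hss
          _ = μ (ball o (r + δ)) - μ (ball o (r - δ)) := hdiff
          _ = ENNReal.ofReal ((μ (ball o (r + δ))).toReal - (μ (ball o (r - δ))).toReal) :=
              (aux_ofReal_sub _ _ (hμball _).ne (measure_mono hsub2)).symm
          _ ≤ ENNReal.ofReal ((K : ℝ) * (2 * δ)) :=
              ENNReal.ofReal_le_ofReal (le_trans (le_abs_self _) hlip)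
      have hmin : 0 < min ε r := lt_min hε h
      have htend : Tendsto (fun δ : ℝ => ENNReal.ofReal ((K : ℝ) * (2 * δ)))
          (nhdsWithin 0 (Ioi 0)) (nhds 0) := by
        have h1 : Tendsto (fun δ : ℝ => (K : ℝ) * (2 * δ)) (nhds 0) (nhds 0) := by
          have h0 : Tendsto (fun δ : ℝ => (K : ℝ) * (2 * δ)) (nhds (0:ℝ))
              (nhds ((K : ℝ) * (2 * 0))) :=
            tendsto_const_nhds.mul (tendsto_const_nhds.mul tendsto_id)
          simpa using h0
        have := (ENNReal.continuous_ofReal.tendsto 0).comp h1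
        rw [ENNReal.ofReal_zero] at this
        exact this.mono_left nhdsWithin_le_nhds
      refine le_antisymm ?_ (zero_le)
      refine ge_of_tendsto htend ?_
      filter_upwards [Ioo_mem_nhdsGT_of_mem ⟨le_refl (0:ℝ), hmin⟩] with δ hδ
      exact key δ hδ.1 hδ.2
  have hνsph : ∀ r : ℝ, ν (sphere o r) = 0 := fun r => hνac (hsph r)
  have hνcb : ∀ r : ℝ, ν (closedBall o r) = ν (ball o r) := by
    intro r
    refine le_antisymm ?_ (measure_mono ball_subset_closedBall)
    have h1 : closedBall o r ⊆ ball o r ∪ sphere o r := by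
      intro z hz
      rcases lt_or_eq_of_le (mem_closedBall.1 hz) with h | h
      · exact Or.inl h
      · exact Or.inr h
    calc ν (closedBall o r) ≤ ν (ball o r ∪ sphere o r) := measure_mono h1
      _ ≤ ν (ball o r) + ν (sphere o r) := measure_union_le _ _
      _ = ν (ball o r) := by rw [hνsph r, add_zero]
  have hνcb_ne : ∀ r : ℝ, ν (closedBall o r) ≠ ⊤ := fun r => by
    rw [hνcb]; exact (hνball r).ne
  -- the cumulative function F
  set F : ℝ → ℝ := fun r => (ν (ball o r)).toReal with hFdef
  have hFmono : Monotone F := fun a b hab =>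
    ENNReal.toReal_mono (hνball b).ne (measure_mono (ball_subset_ball hab))
  -- right limits
  have hFright : ∀ x : ℝ, Tendsto F (nhdsWithin x (Ioi x)) (nhds (F x)) := by
    intro x
    have hinter : ⋂ n : ℕ, ball o (x + 1 / (n + 1)) = closedBall o x := by
      ext z
      simp only [mem_iInter, mem_ball, mem_closedBall]
      constructor
      · intro h
        by_contra hc
        push_neg at hc
        obtain ⟨n, hn⟩ := exists_nat_one_div_lt (sub_pos.2 hc)
        have := h n
        linarith
      · intro h n
        have : (0:ℝ) < 1 / (n + 1) := by positivity
        linarith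
    have hseq : Tendsto (fun n : ℕ => ν (ball o (x + 1 / (n + 1)))) atTop
        (nhds (ν (closedBall o x))) := by
      rw [← hinter]
      refine tendsto_measure_iInter_atTop
        (fun n => measurableSet_ball.nullMeasurableSet) ?_ ⟨0, ?_⟩
      · intro a b hab
        apply ball_subset_ball
        have hab' : (a : ℝ) ≤ b := Nat.cast_le.2 hab
        have : (1:ℝ) / (b + 1) ≤ 1 / (a + 1) := by
          apply one_div_le_one_div_of_le (by positivity)
          linarith
        linarith
      · exact (hνball _).ne
    have hseq' : Tendsto (fun n : ℕ => F (x + 1 / (n + 1))) atTop (nhds (F x)) := by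
      have h2 := (ENNReal.tendsto_toReal (hνcb_ne x)).comp hseq
      have : (ν (closedBall o x)).toReal = F x := by rw [hνcb]
      rw [this] at h2
      exact h2
    have hlim := hFmono.tendsto_nhdsGT x
    have himg : (F '' Ioi x).Nonempty := ⟨F (x + 1), ⟨x + 1, by simp, rfl⟩⟩
    have hbdd : BddBelow (F '' Ioi x) := ⟨F x, by rintro y ⟨z, hz, rfl⟩; exact hFmono hz.le⟩
    have heq : sInf (F '' Ioi x) = F x := by
      refine le_antisymm ?_ (le_csInf himg ?_)
      · refine ge_of_tendsto hseq' ?_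
        filter_upwards with n
        refine csInf_le hbdd ⟨x + 1 / (n + 1), ?_, rfl⟩
        simp only [mem_Ioi]
        have : (0:ℝ) < 1 / (n + 1) := by positivity
        linarith
      · rintro y ⟨z, hz, rfl⟩; exact hFmono hz.le
    rwa [heq] at hlim
  -- left limits
  have hFleft : ∀ x : ℝ, Tendsto F (nhdsWithin x (Iio x)) (nhds (F x)) := by
    intro x
    have hunion : ⋃ n : ℕ, ball o (x - 1 / (n + 1)) = ball o x := by
      ext z
      simp only [mem_iUnion, mem_ball]
      constructor
      · rintro ⟨n, hn⟩
        have : (0:ℝ) < 1 / (n + 1) := by positivity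
        linarith
      · intro h
        obtain ⟨n, hn⟩ := exists_nat_one_div_lt (sub_pos.2 h)
        exact ⟨n, by linarith⟩
    have hseq : Tendsto (fun n : ℕ => ν (ball o (x - 1 / (n + 1)))) atTop
        (nhds (ν (ball o x))) := by
      rw [← hunion]
      have hm : Monotone (fun n : ℕ => ball o (x - 1 / (n + 1))) := by
        intro a b hab
        apply ball_subset_ball
        have hab' : (a : ℝ) ≤ b := Nat.cast_le.2 hab
        have : (1:ℝ) / (b + 1) ≤ 1 / (a + 1) := by
          apply one_div_le_one_div_of_le (by positivity)
          linarith
        linarith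
      exact tendsto_measure_iUnion_atTop hm
    have hseq' : Tendsto (fun n : ℕ => F (x - 1 / (n + 1))) atTop (nhds (F x)) :=
      (ENNReal.tendsto_toReal (hνball x).ne).comp hseq
    have hlim := hFmono.tendsto_nhdsLT x
    have himg : (F '' Iio x).Nonempty := ⟨F (x - 1), ⟨x - 1, by simp, rfl⟩⟩
    have hbdd : BddAbove (F '' Iio x) := ⟨F x, by rintro y ⟨z, hz, rfl⟩; exact hFmono hz.le⟩
    have heq : sSup (F '' Iio x) = F x := by
      refine le_antisymm (csSup_le himg ?_) ?_
      · rintro y ⟨z, hz, rfl⟩; exact hFmono hz.le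
      · refine le_of_tendsto hseq' ?_
        filter_upwards with n
        refine le_csSup hbdd ⟨x - 1 / (n + 1), ?_, rfl⟩
        simp only [mem_Iio]
        have : (0:ℝ) < 1 / (n + 1) := by positivity
        linarith
    rwa [heq] at hlim
  have hFcont : Continuous F := by
    rw [continuous_iff_continuousAt]
    intro x
    rw [continuousAt_iff_continuous_left'_right']
    exact ⟨hFleft x, hFright x⟩
  -- the Stieltjes function and measure
  set S : StieltjesFunction ℝ :=
    ⟨F, hFmono, fun x => (hFcont.continuousAt).continuousWithinAt⟩ with hSdef
  set σ : Measure ℝ := S.measure with hσdef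
  have hSF : (S : ℝ → ℝ) = F := rfl
  -- σ equals the pushforward of ν under T
  have hσρ : σ = ν.map T := by
    refine Measure.ext_of_Ioc σ (ν.map T) ?_
    intro a b hab
    rw [hσdef, StieltjesFunction.measure_Ioc, Measure.map_apply hTmeas measurableSet_Ioc]
    have hpre : T ⁻¹' Ioc a b = closedBall o b \ closedBall o a := by
      ext z
      simp only [mem_preimage, mem_Ioc, mem_diff, mem_closedBall, hTdef]
      rw [dist_comm o z]
      constructor
      · rintro ⟨h1, h2⟩; exact ⟨h2, by intro h; linarith⟩
      · rintro ⟨h1, h2⟩; exact ⟨by linarith [lt_of_not_ge h2], h1⟩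
    rw [hpre, measure_diff (closedBall_subset_closedBall hab.le)
      measurableSet_closedBall.nullMeasurableSet (hνcb_ne a), hνcb, hνcb, hSF]
    exact aux_ofReal_sub _ _ (hνball b).ne (measure_mono (ball_subset_ball hab.le))
  -- local absolute continuity of σ on (0, ∞)
  have hlocAC : ∀ a : ℝ, 0 < a → ∃ u : Set ℝ, u ∈ nhds a ∧
      ∀ N : Set ℝ, MeasurableSet N → volume N = 0 → σ (N ∩ u) = 0 := by
    intro a ha
    obtain ⟨K, t, ht, hK⟩ := hLip a ha
    obtain ⟨ε₀, hε₀, hsub⟩ : ∃ ε > 0, Ioo (a - ε) (a + ε) ∩ Ioi 0 ⊆ t := by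
      rcases mem_nhdsWithin_iff.1 ht with ⟨ε, hε, h'⟩
      exact ⟨ε, hε, by rwa [Real.ball_eq_Ioo] at h'⟩
    set ε := min ε₀ a with hεdef
    have hε : 0 < ε := lt_min hε₀ ha
    set c := a - ε / 2 with hcdef
    set d := a + ε / 2 with hddef
    have hc0 : 0 < c := by
      have : ε ≤ a := min_le_right _ _
      simp only [hcdef]; linarith
    have hcd' : c ≤ d := by simp only [hcdef, hddef]; linarith
    have hca : c < a := by simp only [hcdef]; linarith
    have had : a < d := by simp only [hddef]; linarith
    have hcdt : Icc c d ⊆ t := by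
      intro x hx
      refine hsub ⟨⟨?_, ?_⟩, ?_⟩
      · have : ε ≤ ε₀ := min_le_left _ _
        simp only [hcdef] at hx; linarith [hx.1]
      · have : ε ≤ ε₀ := min_le_left _ _
        simp only [hddef] at hx; linarith [hx.2]
      · simp only [mem_Ioi]; linarith [hx.1]
    obtain ⟨C, hC0, hCle⟩ := hC (d + 1)
    set L : ℝ := C * K with hLdef
    have hL0 : 0 ≤ L := mul_nonneg hC0 K.2
    -- Lipschitz-type bound for F on Icc c d
    have hFdiff : ∀ x ∈ Icc c d, ∀ y ∈ Icc c d, x ≤ y → F y - F x ≤ L * (y - x) := by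
      intro x hx y hy hxy
      have hxt := hcdt hx
      have hyt := hcdt hy
      have hballs : ball o x ⊆ ball o y := ball_subset_ball hxy
      have hann_sub : ball o y \ ball o x ⊆ ball o (d + 1) := by
        intro z hz
        have := mem_ball.1 hz.1
        rw [mem_ball]
        linarith [hy.2]
      have h1 : F y - F x = (ν (ball o y \ ball o x)).toReal := by
        rw [hFdef]
        rw [measure_diff hballs measurableSet_ball.nullMeasurableSet (hνball x).ne,
          ENNReal.toReal_sub_of_le (measure_mono hballs) (hνball y).ne]
      have h2 : ν (ball o y \ ball o x) ≤ ENNReal.ofReal C * μ (ball o y \ ball o x) := by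
        rw [hνdef, withDensity_apply _ (measurableSet_ball.diff measurableSet_ball)]
        calc ∫⁻ z in ball o y \ ball o x, w z ∂μ
            ≤ ∫⁻ _ in ball o y \ ball o x, ENNReal.ofReal C ∂μ :=
              setLIntegral_mono measurable_const fun z hz =>
                ENNReal.ofReal_le_ofReal (hCle z (hann_sub hz))
          _ = ENNReal.ofReal C * μ (ball o y \ ball o x) := setLIntegral_const _ _
      have hμdiff_ne : μ (ball o y \ ball o x) ≠ ⊤ :=
        (lt_of_le_of_lt (measure_mono hann_sub) (hμball (d + 1))).ne
      have h3 : (μ (ball o y \ ball o x)).toReal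
          = (μ (ball o y)).toReal - (μ (ball o x)).toReal := by
        rw [measure_diff hballs measurableSet_ball.nullMeasurableSet (hμball x).ne,
          ENNReal.toReal_sub_of_le (measure_mono hballs) (hμball y).ne]
      have h4 : (μ (ball o y)).toReal - (μ (ball o x)).toReal ≤ (K : ℝ) * (y - x) := by
        have hlip := lipschitzOnWith_iff_dist_le_mul.1 hK _ hyt _ hxt
        rw [Real.dist_eq, Real.dist_eq, abs_of_nonneg (sub_nonneg.2 hxy)] at hlip
        exact le_trans (le_abs_self _) hlip
      calc F y - F x = (ν (ball o y \ ball o x)).toReal := h1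
        _ ≤ (ENNReal.ofReal C * μ (ball o y \ ball o x)).toReal := by
            refine ENNReal.toReal_mono ?_ h2
            exact ENNReal.mul_ne_top ENNReal.ofReal_ne_top hμdiff_ne
        _ = C * (μ (ball o y \ ball o x)).toReal := by
            rw [ENNReal.toReal_mul, ENNReal.toReal_ofReal hC0]
        _ = C * ((μ (ball o y)).toReal - (μ (ball o x)).toReal) := by rw [h3]
        _ ≤ C * ((K : ℝ) * (y - x)) := mul_le_mul_of_nonneg_left h4 hC0
        _ = L * (y - x) := by rw [hLdef]; ring
    -- clamped function
    set cl : ℝ → ℝ := fun x => max c (min x d) with hcldef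
    have hcl_mem : ∀ x, cl x ∈ Icc c d :=
      fun x => ⟨le_max_left _ _, max_le hcd' (min_le_right x d)⟩
    have hcl_mono : Monotone cl := fun x y h =>
      max_le_max le_rfl (min_le_min h le_rfl)
    have hcl_lip : ∀ x y : ℝ, x ≤ y → cl y - cl x ≤ y - x := by
      intro x y hxy
      simp only [hcldef]
      have hmin : min y d - min x d ≤ y - x := by
        rcases le_total y d with h | h
        · rw [min_eq_left h, min_eq_left (hxy.trans h)]
        · rw [min_eq_right h]
          rcases le_total x d with h' | h'
          · rw [min_eq_left h']; linarith
          · rw [min_eq_right h']; linarith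
      have hminle : min x d ≤ min y d := min_le_min hxy le_rfl
      rcases le_total c (min x d) with h | h
      · rw [max_eq_right h, max_eq_right (h.trans hminle)]; exact hmin
      · rw [max_eq_left h]
        rcases le_total c (min y d) with h' | h'
        · rw [max_eq_right h']; linarith
        · rw [max_eq_left h']; linarith
    set Ft : ℝ → ℝ := fun x => F (cl x) with hFtdef
    have hFtmono : Monotone Ft := fun x y h => hFmono (hcl_mono h)
    have hFtcont : Continuous Ft :=
      hFcont.comp (continuous_const.max (continuous_id.min continuous_const))
    set SFt : StieltjesFunction ℝ :=
      ⟨Ft, hFtmono, fun x => (hFtcont.continuousAt).continuousWithinAt⟩ with hSFtdef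
    set G : ℝ → ℝ := fun x => L * x - Ft x with hGdef
    have hGmono : Monotone G := by
      intro x y hxy
      simp only [hGdef]
      have h1 : cl x ≤ cl y := hcl_mono hxy
      have h2 : F (cl y) - F (cl x) ≤ L * (cl y - cl x) :=
        hFdiff (cl x) (hcl_mem x) (cl y) (hcl_mem y) h1
      have h3 : L * (cl y - cl x) ≤ L * (y - x) :=
        mul_le_mul_of_nonneg_left (hcl_lip x y hxy) hL0
      simp only [hFtdef]
      nlinarith
    have hGcont : Continuous G := (continuous_const.mul continuous_id).sub hFtcont
    set SG : StieltjesFunction ℝ :=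
      ⟨G, hGmono, fun x => (hGcont.continuousAt).continuousWithinAt⟩ with hSGdef
    haveI : IsLocallyFiniteMeasure (SFt.measure + SG.measure) := by
      refine ⟨fun x => ⟨Ioo (x - 1) (x + 1), Ioo_mem_nhds (by linarith) (by linarith), ?_⟩⟩
      rw [Measure.add_apply]
      exact ENNReal.add_lt_top.2 ⟨measure_Ioo_lt_top, measure_Ioo_lt_top⟩
    have hsum : SFt.measure + SG.measure = (ENNReal.ofReal L) • volume := by
      refine Measure.ext_of_Ioc _ _ ?_
      intro x y hxy
      rw [Measure.add_apply, StieltjesFunction.measure_Ioc, StieltjesFunction.measure_Ioc,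
        Measure.smul_apply, Real.volume_Ioc, smul_eq_mul,
        ← ENNReal.ofReal_mul hL0]
      show ENNReal.ofReal (Ft y - Ft x) + ENNReal.ofReal (G y - G x)
        = ENNReal.ofReal (L * (y - x))
      rw [← ENNReal.ofReal_add (sub_nonneg.2 (hFtmono hxy.le)) (sub_nonneg.2 (hGmono hxy.le))]
      congr 1
      simp only [hGdef]
      ring
    have hle : SFt.measure ≤ (ENNReal.ofReal L) • volume := by
      rw [← hsum]
      exact Measure.le_add_right le_rfl
    -- σ agrees with SFt.measure on Ioc c d
    haveI : IsFiniteMeasure (σ.restrict (Ioc c d)) := by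
      refine ⟨?_⟩
      rw [Measure.restrict_apply_univ]
      exact measure_Ioc_lt_top
    have hagree : σ.restrict (Ioc c d) = SFt.measure.restrict (Ioc c d) := by
      refine Measure.ext_of_Ioc _ _ ?_
      intro x y hxy
      rw [Measure.restrict_apply measurableSet_Ioc, Measure.restrict_apply measurableSet_Ioc,
        Ioc_inter_Ioc, hσdef, StieltjesFunction.measure_Ioc, StieltjesFunction.measure_Ioc]
      show ENNReal.ofReal (F (y ⊓ d) - F (x ⊔ c)) = ENNReal.ofReal (Ft (y ⊓ d) - Ft (x ⊔ c))
      rcases le_or_gt (x ⊔ c) (y ⊓ d) with h | h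
      · have h1 : cl (x ⊔ c) = x ⊔ c := by
          simp only [hcldef]
          rw [min_eq_left (h.trans inf_le_right), max_eq_right le_sup_right]
        have h2 : cl (y ⊓ d) = y ⊓ d := by
          simp only [hcldef]
          rw [min_eq_left inf_le_right, max_eq_right (le_sup_right.trans h)]
        simp only [hFtdef, h1, h2]
      · rw [ENNReal.ofReal_of_nonpos (sub_nonpos.2 (hFmono h.le)),
          ENNReal.ofReal_of_nonpos (sub_nonpos.2 (hFtmono h.le))]
    refine ⟨Ioo c d, Ioo_mem_nhds hca had, ?_⟩
    intro N hNm hN0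
    have hNsub : N ∩ Ioo c d ⊆ Ioc c d := fun x hx => ⟨hx.2.1, hx.2.2.le⟩
    have hNmeas : MeasurableSet (N ∩ Ioo c d) := hNm.inter measurableSet_Ioo
    have h1 : σ (N ∩ Ioo c d) = σ.restrict (Ioc c d) (N ∩ Ioo c d) := by
      rw [Measure.restrict_apply hNmeas, inter_eq_self_of_subset_left hNsub]
    rw [h1, hagree, Measure.restrict_apply hNmeas, inter_eq_self_of_subset_left hNsub]
    have h2 := Measure.le_iff'.1 hle (N ∩ Ioo c d)
    refine le_antisymm (le_trans h2 ?_) (zero_le)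
    rw [Measure.smul_apply, smul_eq_mul]
    have : volume (N ∩ Ioo c d) = 0 :=
      le_antisymm (le_trans (measure_mono inter_subset_left) hN0.le) (zero_le)
    rw [this, mul_zero]
  -- global absolute continuity on Ioi 0
  have hAC : ∀ N : Set ℝ, MeasurableSet N → N ⊆ Ioi 0 → volume N = 0 → σ N = 0 := by
    intro N hNm hNsub hN0
    have hlocAC' : ∀ a : ℝ, ∃ u : Set ℝ, 0 < a → (u ∈ nhds a ∧
        ∀ N : Set ℝ, MeasurableSet N → volume N = 0 → σ (N ∩ u) = 0) := by
      intro a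
      by_cases h : 0 < a
      · obtain ⟨u, hu1, hu2⟩ := hlocAC a h
        exact ⟨u, fun _ => ⟨hu1, hu2⟩⟩
      · exact ⟨univ, fun h' => absurd h' h⟩
    choose u hu using hlocAC'
    obtain ⟨t, hts, htc, hcover⟩ := TopologicalSpace.countable_cover_nhdsWithin
      (f := u) (s := Ioi (0:ℝ)) (fun x hx => nhdsWithin_le_nhds ((hu x hx).1))
    have hNcover : N ⊆ ⋃ a ∈ t, N ∩ u a := by
      intro x hx
      obtain ⟨a, ha, hxa⟩ := by
        have := hcover (hNsub hx)
        simpa using this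
      simp only [mem_iUnion]
      exact ⟨a, ha, hx, hxa⟩
    refine le_antisymm (le_trans (measure_mono hNcover) ?_) (zero_le)
    rw [(measure_biUnion_null_iff htc).2]
    intro a ha
    exact (hu a (hts ha)).2 N hNm hN0
  -- restrict σ to Ioo 0 R equals the density part
  have hrestr : σ.restrict (Ioo 0 R)
      = (volume.withDensity (σ.rnDeriv volume)).restrict (Ioo 0 R) := by
    obtain ⟨s, hsm, hs1, hs2⟩ := Measure.mutuallySingular_singularPart σ volume
    have hsing : σ.singularPart volume (Ioo 0 R) = 0 := by
      have hsplit : Ioo (0:ℝ) R ⊆ (Ioo 0 R ∩ s) ∪ (Ioo 0 R ∩ sᶜ) := by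
        intro x hx
        by_cases h : x ∈ s
        · exact Or.inl ⟨hx, h⟩
        · exact Or.inr ⟨hx, h⟩
      have h1 : σ.singularPart volume (Ioo 0 R ∩ s) = 0 :=
        le_antisymm (le_trans (measure_mono inter_subset_right) hs1.le) (zero_le)
      have h2 : σ.singularPart volume (Ioo 0 R ∩ sᶜ) = 0 := by
        have h3 : σ (Ioo 0 R ∩ sᶜ) = 0 := by
          refine hAC _ (measurableSet_Ioo.inter hsm.compl) ?_ ?_
          · exact fun x hx => hx.1.1
          · exact le_antisymm (le_trans (measure_mono inter_subset_right) hs2.le) (zero_le)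
        exact le_antisymm (le_trans (Measure.le_iff'.1 (Measure.singularPart_le σ volume) _)
          h3.le) (zero_le)
      refine le_antisymm ?_ (zero_le)
      calc σ.singularPart volume (Ioo 0 R)
          ≤ σ.singularPart volume ((Ioo 0 R ∩ s) ∪ (Ioo 0 R ∩ sᶜ)) := measure_mono hsplit
        _ ≤ σ.singularPart volume (Ioo 0 R ∩ s) + σ.singularPart volume (Ioo 0 R ∩ sᶜ) :=
            measure_union_le _ _
        _ = 0 := by rw [h1, h2, add_zero]
    conv_lhs => rw [Measure.haveLebesgueDecomposition_add σ volume]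
    rw [Measure.restrict_add, Measure.restrict_eq_zero.2 hsing, zero_add]
  -- boundary integral equals the RN derivative a.e.
  have hbdry : ∀ᵐ r : ℝ, bdryIntegral μ f o r = (σ.rnDeriv volume r).toReal := by
    filter_upwards [S.ae_hasDerivAt] with r hr
    replace hr : HasDerivAt F ((σ.rnDeriv volume r).toReal) r := hr
    have hder : Tendsto (fun δ : ℝ => (F (r + δ) - F r) / δ)
        (nhdsWithin 0 (Ioi 0)) (nhds ((σ.rnDeriv volume r).toReal)) := by
      have hslope := hasDerivAt_iff_tendsto_slope.1 hr
      have hmap : Tendsto (fun δ : ℝ => r + δ) (nhdsWithin 0 (Ioi 0))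
          (nhdsWithin r {r}ᶜ) := by
        refine tendsto_nhdsWithin_of_tendsto_nhds_of_eventually_within _ ?_ ?_
        · have h1 : Tendsto (fun δ : ℝ => r + δ) (nhds 0) (nhds r) := by
            have h0 : Tendsto (fun δ : ℝ => r + δ) (nhds (0:ℝ)) (nhds (r + 0)) :=
              tendsto_const_nhds.add tendsto_id
            simpa using h0
          exact h1.mono_left nhdsWithin_le_nhds
        · filter_upwards [self_mem_nhdsWithin] with δ hδ
          simp only [mem_compl_iff, mem_singleton_iff]
          intro h
          have : δ = 0 := by linarith [congrArg (fun x => x - r) h]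
          rw [this] at hδ
          exact lt_irrefl 0 (mem_Ioi.1 hδ)
      have := hslope.comp hmap
      refine this.congr fun δ => ?_
      simp only [Function.comp_apply, slope_def_field, add_sub_cancel_left]
    have hann : ∀ δ : ℝ, 0 < δ →
        (∫ z in ball o (r + δ) \ ball o r, f z ∂μ) = F (r + δ) - F r := by
      intro δ hδ
      have hsub : ball o r ⊆ ball o (r + δ) := ball_subset_ball (by linarith)
      rw [integral_eq_lintegral_of_nonneg_ae (Eventually.of_forall hf0)
        hf.aestronglyMeasurable]
      have h1 : ∫⁻ z in ball o (r + δ) \ ball o r, ENNReal.ofReal (f z) ∂μ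
          = ν (ball o (r + δ) \ ball o r) := by
        rw [hνdef, withDensity_apply _ (measurableSet_ball.diff measurableSet_ball)]
      rw [h1, measure_diff hsub measurableSet_ball.nullMeasurableSet (hνball r).ne,
        ENNReal.toReal_sub_of_le (measure_mono hsub) (hνball (r + δ)).ne]
    rw [bdryIntegral]
    have hcongr : (fun δ : ℝ => (∫ z in ball o (r + δ) \ ball o r, f z ∂μ) / δ)
        =ᶠ[nhdsWithin 0 (Ioi 0)] fun δ : ℝ => (F (r + δ) - F r) / δ := by
      filter_upwards [self_mem_nhdsWithin] with δ hδ
      rw [hann δ hδ]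
    rw [limsup_congr hcongr]
    exact hder.limsup_eq
  have hlt : ∀ᵐ r : ℝ, σ.rnDeriv volume r < ⊤ := Measure.rnDeriv_lt_top σ volume
  -- LHS chain
  have step1 : ∫⁻ z in ball o R, ENNReal.ofReal (φ (dist o z) * f z) ∂μ
      = ∫⁻ z in ball o R, ENNReal.ofReal (φ (T z)) * w z ∂μ := by
    apply lintegral_congr_ae
    have hO : (μ.restrict (ball o R)) {o} = 0 := by
      rw [Measure.restrict_apply (measurableSet_singleton o)]
      exact le_antisymm (le_trans (measure_mono inter_subset_left) hpt.le) (zero_le)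
    filter_upwards [measure_eq_zero_iff_ae_notMem.1 hO] with z hz
    have hzo : o ≠ z := fun h => hz (by simp [← h])
    have hd : 0 < dist o z := dist_pos.2 hzo
    rw [ENNReal.ofReal_mul (hφ0 _ hd)]
  have step2 : ∫⁻ z in ball o R, ENNReal.ofReal (φ (T z)) * w z ∂μ
      = ∫⁻ z in ball o R, ENNReal.ofReal (φ (T z)) ∂ν := by
    rw [hνdef, restrict_withDensity measurableSet_ball,
      lintegral_withDensity_eq_lintegral_mul_non_measurable _ hwmeas
        (Eventually.of_forall fun z => ENNReal.ofReal_lt_top)]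
    exact lintegral_congr fun z => mul_comm _ _
  have hTset : T ⁻¹' (Ioo 0 R) = ball o R \ {o} := by
    ext z
    simp only [mem_preimage, mem_Ioo, mem_diff, mem_ball, mem_singleton_iff, hTdef]
    rw [dist_comm o z]
    constructor
    · rintro ⟨h1, h2⟩
      refine ⟨h2, fun h => ?_⟩
      rw [h] at h1
      simp at h1
    · rintro ⟨h1, h2⟩
      refine ⟨?_, h1⟩
      rcases lt_or_eq_of_le (dist_nonneg (x := z) (y := o)) with h | h
      · exact h
      · exact absurd (dist_eq_zero.1 h.symm) h2
  have step3 : ∫⁻ z in ball o R, ENNReal.ofReal (φ (T z)) ∂ν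
      = ∫⁻ z in T ⁻¹' (Ioo 0 R), ENNReal.ofReal (φ (T z)) ∂ν := by
    rw [hTset]
    have : (ball o R : Set X) =ᵐ[ν] (ball o R \ {o} : Set X) := by
      refine (ae_eq_set.2 ⟨?_, ?_⟩)
      · refine measure_mono_null (fun z hz => ?_) (hνac hpt)
        rcases hz with ⟨h1, h2⟩
        by_contra h
        exact h2 ⟨h1, h⟩
      · exact measure_mono_null (fun z hz => (hz.2 hz.1.1).elim) (hνac hpt)
    rw [Measure.restrict_congr_set this]
  have step4 : ∫⁻ z in T ⁻¹' (Ioo 0 R), ENNReal.ofReal (φ (T z)) ∂ν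
      = ∫⁻ r in Ioo 0 R, ENNReal.ofReal (φ r) ∂(ν.map T) := by
    have hg : AEMeasurable (fun r => ENNReal.ofReal (φ r)) ((ν.map T).restrict (Ioo 0 R)) :=
      ENNReal.measurable_ofReal.comp_aemeasurable
        ((hφc.mono Ioo_subset_Ioi_self).aemeasurable measurableSet_Ioo)
    rw [show ∫⁻ r in Ioo 0 R, ENNReal.ofReal (φ r) ∂(ν.map T)
        = ∫⁻ r, ENNReal.ofReal (φ r) ∂((ν.map T).restrict (Ioo 0 R)) from rfl,
      Measure.restrict_map hTmeas measurableSet_Ioo,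
      lintegral_map' (by rwa [← Measure.restrict_map hTmeas measurableSet_Ioo])
        hTmeas.aemeasurable]
  have step5 : ∫⁻ r in Ioo 0 R, ENNReal.ofReal (φ r) ∂(ν.map T)
      = ∫⁻ r in Ioo 0 R, σ.rnDeriv volume r * ENNReal.ofReal (φ r) := by
    rw [← hσρ]
    rw [show ∫⁻ r in Ioo 0 R, ENNReal.ofReal (φ r) ∂σ
        = ∫⁻ r, ENNReal.ofReal (φ r) ∂(σ.restrict (Ioo 0 R)) from rfl, hrestr,
      restrict_withDensity measurableSet_Ioo,
      lintegral_withDensity_eq_lintegral_mul_non_measurable _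
        (Measure.measurable_rnDeriv σ volume) (ae_restrict_of_ae hlt)]
    rfl
  have stepR : ∫⁻ r in Ioo (0:ℝ) R, ENNReal.ofReal (φ r * bdryIntegral μ f o r)
      = ∫⁻ r in Ioo 0 R, σ.rnDeriv volume r * ENNReal.ofReal (φ r) := by
    apply lintegral_congr_ae
    filter_upwards [ae_restrict_of_ae hbdry, ae_restrict_of_ae hlt,
      ae_restrict_mem measurableSet_Ioo] with r h1 h2 h3
    rw [h1, ENNReal.ofReal_mul (hφ0 r h3.1), ENNReal.ofReal_toReal h2.ne, mul_comm]
  rw [step1, step2, step3, step4, step5, stepR]
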